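/- Φ(1) = 1, and for every integer n ≥ 2, Φ(n) = ∑_{d|n} μ(d)·2^{n/d}, where the sum is over all positive divisors d of n and μ is the Möbius function. -/
import Mathlib

/-- `Phi n` is the number of nonempty subsets `A` of `{1,2,...,n}` such that
`gcd(A)` is relatively prime to `n`. -/
def Phi (n : ℕ) : ℕ :=
  ((Finset.Icc 1 n).powerset.filter
    (fun A => A.Nonempty ∧ Nat.gcd (A.gcd id) n = 1)).card

lemma sum_moebius_divisors (m : ℕ) :
    ∑ d ∈ m.divisors, (ArithmeticFunction.moebius d) = if m = 1 then 1 else 0 := by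
  rw [← ArithmeticFunction.coe_mul_zeta_apply, ArithmeticFunction.moebius_mul_coe_zeta,
    ArithmeticFunction.one_apply]

lemma card_dvd_subsets (n d : ℕ) :
    ((Finset.Icc 1 n).powerset.filter (fun A => d ∣ A.gcd id)).card = 2 ^ (n / d) := by
  have h : (Finset.Icc 1 n).powerset.filter (fun A => d ∣ A.gcd id)
      = ((Finset.Icc 1 n).filter (fun x => d ∣ x)).powerset := by
    ext A
    simp only [Finset.mem_filter, Finset.mem_powerset, Finset.subset_iff]
    constructor
    · rintro ⟨hA, hdvd⟩ x hx
      exact ⟨hA hx, hdvd.trans (Finset.gcd_dvd hx)⟩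
    · intro h
      exact ⟨fun x hx => (h hx).1, Finset.dvd_gcd (fun x hx => (h hx).2)⟩
  rw [h, Finset.card_powerset]
  congr 1
  rw [show Finset.Icc 1 n = Finset.Ioc 0 n from Finset.Icc_add_one_left_eq_Ioc 0 n]
  exact Nat.Ioc_filter_dvd_card_eq_div n d

theorem Phi_one_and_Phi_eq_sum_moebius :
    Phi 1 = 1 ∧ ∀ n : ℕ, 2 ≤ n →
      (Phi n : ℤ) = ∑ d ∈ n.divisors, ArithmeticFunction.moebius d * 2 ^ (n / d) := by
  refine ⟨by decide, fun n hn => ?_⟩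
  have hn0 : n ≠ 0 := by omega
  have hPhi : Phi n = ((Finset.Icc 1 n).powerset.filter
      (fun A => Nat.gcd (A.gcd id) n = 1)).card := by
    unfold Phi
    congr 1
    apply Finset.filter_congr
    intro A _
    constructor
    · exact fun h => h.2
    · intro h
      refine ⟨?_, h⟩
      rcases A.eq_empty_or_nonempty with rfl | hA
      · simp at h; omega
      · exact hA
  have hdiv : ∀ A : Finset ℕ, (Nat.gcd (A.gcd id) n).divisors
      = n.divisors.filter (· ∣ A.gcd id) := by
    intro A
    ext d
    simp only [Nat.mem_divisors, Finset.mem_filter, Nat.dvd_gcd_iff]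
    constructor
    · rintro ⟨⟨h1, h2⟩, -⟩
      exact ⟨⟨h2, hn0⟩, h1⟩
    · rintro ⟨⟨h2, -⟩, h1⟩
      exact ⟨⟨h1, h2⟩, fun hc => hn0 (Nat.eq_zero_of_gcd_eq_zero_right hc)⟩
  calc (Phi n : ℤ)
      = ∑ A ∈ (Finset.Icc 1 n).powerset,
          (if Nat.gcd (A.gcd id) n = 1 then (1:ℤ) else 0) := by
        rw [hPhi, Finset.card_filter]
        push_cast
        rfl
    _ = ∑ A ∈ (Finset.Icc 1 n).powerset,
          ∑ d ∈ (Nat.gcd (A.gcd id) n).divisors, (ArithmeticFunction.moebius d : ℤ) := by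
        refine Finset.sum_congr rfl fun A _ => ?_
        rw [sum_moebius_divisors]
    _ = ∑ A ∈ (Finset.Icc 1 n).powerset,
          ∑ d ∈ n.divisors, (if d ∣ A.gcd id then (ArithmeticFunction.moebius d : ℤ) else 0) := by
        refine Finset.sum_congr rfl fun A _ => ?_
        rw [hdiv A, Finset.sum_filter]
    _ = ∑ d ∈ n.divisors, ∑ A ∈ (Finset.Icc 1 n).powerset,
          (if d ∣ A.gcd id then (ArithmeticFunction.moebius d : ℤ) else 0) := Finset.sum_comm
    _ = ∑ d ∈ n.divisors, (ArithmeticFunction.moebius d : ℤ) * 2 ^ (n / d) := by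
        refine Finset.sum_congr rfl fun d _ => ?_
        rw [← Finset.sum_filter, Finset.sum_const, card_dvd_subsets n d, nsmul_eq_mul]
        push_cast
        ring
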